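/- Let n, k, α be positive integers with k ≥ 3 and 4α − 3n ≥ 1, and set r₄(n,k,α) = 4^{k−1}·n − ((4^k − 1)/3)·α. If 4·r₄(n,k,α) < k, then there is no quaternary Hermitian LCD [n,k,α] code C whose Hermitian dual C^{⊥H} contains no vector of weight 1 (i.e., no such code with d(C^{⊥H}) ≥ 2). -/

import Mathlib

open scoped Classical

noncomputable section

/-- The finite field with four elements. -/
abbrev F4 := GaloisField 2 2

/-- The (Hamming) weight of a vector over `F4`: the number of nonzero coordinates. -/
def wt {n : ℕ} (x : Fin n → F4) : ℕ :=
  (Finset.univ.filter (fun i => x i ≠ 0)).card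

/-- Hermitian inner product on `F4^n`: `∑ i, x i * (conj (y i))` with `conj z = z^2`. -/
def hermInner {n : ℕ} (x y : Fin n → F4) : F4 :=
  ∑ i, x i * (y i) ^ 2

/-- Membership in the Hermitian dual `C^{⊥H}` of a code `C`. -/
def inHermDual {n : ℕ} (C : Submodule F4 (Fin n → F4)) (x : Fin n → F4) : Prop :=
  ∀ y ∈ C, hermInner x y = 0

/-- `C` is Hermitian LCD: `C ∩ C^{⊥H} = {0}`. -/
def IsHermLCD {n : ℕ} (C : Submodule F4 (Fin n → F4)) : Prop :=
  ∀ x ∈ C, inHermDual C x → x = 0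

/-- `C` has minimum weight (exactly) `d`. -/
def minWtIs {n : ℕ} (C : Submodule F4 (Fin n → F4)) (d : ℕ) : Prop :=
  (∃ x ∈ C, x ≠ 0 ∧ wt x = d) ∧ ∀ x ∈ C, x ≠ 0 → d ≤ wt x

/-- `C` is a quaternary Hermitian LCD `[n,k,d]` code. -/
def IsHermLCDCode (n k d : ℕ) (C : Submodule F4 (Fin n → F4)) : Prop :=
  Module.finrank F4 C = k ∧ IsHermLCD C ∧ minWtIs C d

/-- `d₄(n,k) = d`: the largest minimum weight among quaternary Hermitian LCD `[n,k]` codes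
is `d`. -/
def d4Is (n k d : ℕ) : Prop :=
  (∃ C : Submodule F4 (Fin n → F4), IsHermLCDCode n k d C) ∧
  (∀ C : Submodule F4 (Fin n → F4), Module.finrank F4 C = k → IsHermLCD C →
    ∃ x ∈ C, x ≠ 0 ∧ wt x ≤ d)

end

noncomputable section AuxStuff

instance F4.instFintype : Fintype F4 := Fintype.ofFinite F4

lemma F4.card : Fintype.card F4 = 4 := by
  have := GaloisField.card 2 2 (by norm_num)
  simpa [Nat.card_eq_fintype_card] using this

lemma F4.pow4 (a : F4) : a ^ 4 = a := by
  have := FiniteField.pow_card a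
  rwa [F4.card] at this

lemma F4.cube (a : F4) (h : a ≠ 0) : a ^ 3 = 1 := by
  have := FiniteField.pow_card_sub_one_eq_one a h
  rwa [F4.card] at this

lemma F4.exists_v : ∃ v : F4, v ≠ 0 ∧ v ≠ 1 := by
  by_contra h
  push_neg at h
  have hsub : (Finset.univ : Finset F4) ⊆ {0, 1} := by
    intro v _
    rcases eq_or_ne v 0 with rfl | hv
    · simp
    · simp [h v hv]
  have := Finset.card_le_card hsub
  have h2 : ({0, 1} : Finset F4).card ≤ 2 := Finset.card_insert_le _ _ |>.trans (by simp)
  rw [Finset.card_univ, F4.card] at this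
  omega

lemma F4.sq_add (a b : F4) : (a + b) ^ 2 = a ^ 2 + b ^ 2 := CharTwo.add_sq a b

lemma hermInner_self {n : ℕ} (x : Fin n → F4) : hermInner x x = (wt x : F4) := by
  unfold hermInner wt
  rw [Finset.card_filter, Nat.cast_sum]
  apply Finset.sum_congr rfl
  intro i _
  by_cases h : x i = 0
  · simp [h]
  · have h3 : x i * x i ^ 2 = x i ^ 3 := by ring
    simp [h, h3, F4.cube _ h]

lemma hermInner_add_right {n : ℕ} (x y z : Fin n → F4) :
    hermInner x (y + z) = hermInner x y + hermInner x z := by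
  unfold hermInner
  rw [← Finset.sum_add_distrib]
  apply Finset.sum_congr rfl
  intro i _
  have : (y i + z i) ^ 2 = y i ^ 2 + z i ^ 2 := F4.sq_add _ _
  simp only [Pi.add_apply, this]
  ring

lemma hermInner_smul_right {n : ℕ} (x y : Fin n → F4) (a : F4) :
    hermInner x (a • y) = a ^ 2 * hermInner x y := by
  unfold hermInner
  rw [Finset.mul_sum]
  apply Finset.sum_congr rfl
  intro i _
  simp only [Pi.smul_apply, smul_eq_mul]
  ring

lemma hermInner_sq {n : ℕ} (x y : Fin n → F4) :
    (hermInner x y) ^ 2 = ∑ i, y i * x i ^ 2 := by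
  unfold hermInner
  calc (∑ i, x i * y i ^ 2) ^ 2 = ∑ i, (x i * y i ^ 2) ^ 2 := by
        have h := map_sum (frobenius F4 2) (fun i => x i * y i ^ 2) Finset.univ
        simp only [frobenius_def] at h
        exact h
    _ = ∑ i, y i * x i ^ 2 := by
        apply Finset.sum_congr rfl
        intro i _
        have h1 : (x i * y i ^ 2) ^ 2 = x i ^ 2 * y i ^ 4 := by ring
        rw [h1, F4.pow4]
        ring

lemma herm_polar {n : ℕ} (x y : Fin n → F4) :
    hermInner (x + y) (x + y)
      = hermInner x x + hermInner y y + (hermInner x y + (hermInner x y) ^ 2) := by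
  rw [hermInner_sq]
  unfold hermInner
  rw [← Finset.sum_add_distrib, ← Finset.sum_add_distrib, ← Finset.sum_add_distrib]
  apply Finset.sum_congr rfl
  intro i _
  simp only [Pi.add_apply, F4.sq_add]
  ring

end AuxStuff

set_option maxHeartbeats 2000000 in
/-- if `4·r₄(n,k,α) < k`, `k ≥ 3` and `4α - 3n ≥ 1`, there is no quaternary
Hermitian LCD `[n,k,α]` code whose Hermitian dual has no vector of weight 1. -/
theorem stmt7 (n k α : ℕ) (hn : 1 ≤ n) (hk : 3 ≤ k) (hα : 1 ≤ α)
    (h1 : 1 ≤ 4 * (α : ℤ) - 3 * (n : ℤ))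
    (h2 : 4 * (4 ^ (k - 1) * (n : ℤ) - (((4 ^ k - 1) / 3 : ℕ) : ℤ) * (α : ℤ)) < (k : ℤ)) :
    ¬ ∃ C : Submodule F4 (Fin n → F4),
      IsHermLCDCode n k α C ∧ ∀ x, inHermDual C x → wt x ≠ 1 := by
  classical
  rintro ⟨C, ⟨hdim, hLCD, -, hminlb⟩, hdual⟩
  -- basic facts
  have hvv : ∀ v : Fin n → F4, v + v = 0 := by
    intro v; funext j; exact CharTwo.add_self_eq_zero (v j)
  set F : Finset (Fin n → F4) := Finset.univ.filter (fun c => c ∈ C) with hF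
  have hmemF : ∀ c, c ∈ F ↔ c ∈ C := by intro c; simp [hF]
  have hcardF : F.card = 4 ^ k := by
    have hC : Nat.card C = 4 ^ k := by
      rw [Nat.card_eq_fintype_card, Module.card_eq_pow_finrank (K := F4) (V := C), F4.card, hdim]
    calc F.card = Fintype.card {x // x ∈ C} := (Fintype.card_subtype _).symm
      _ = Nat.card {x // x ∈ C} := (Nat.card_eq_fintype_card).symm
      _ = 4 ^ k := hC
  have h4k : (4:ℕ) ^ k = 4 * 4 ^ (k - 1) := by
    conv_lhs => rw [show k = (k - 1) + 1 by omega]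
    rw [pow_succ]
    ring
  have hkP : k ≤ 4 ^ (k - 1) := by
    have h1 : k - 1 < 2 ^ (k - 1) := Nat.lt_two_pow_self
    have h2 : (2:ℕ) ^ (k - 1) ≤ 4 ^ (k - 1) := Nat.pow_le_pow_left (by norm_num) _
    omega
  -- no zero columns
  have hcol : ∀ i : Fin n, ∃ c ∈ C, c i ≠ 0 := by
    intro i
    by_contra h
    push_neg at h
    have hd : inHermDual C (Pi.single i (1:F4)) := by
      intro y hy
      unfold hermInner
      apply Finset.sum_eq_zero
      intro j _
      by_cases hj : j = i
      · subst hj; rw [h y hy]; ring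
      · rw [Pi.single_eq_of_ne hj]; ring
    have hwt : wt (Pi.single i (1:F4)) = 1 := by
      unfold wt
      have he : (Finset.univ.filter (fun j => (Pi.single i (1:F4) : Fin n → F4) j ≠ 0)) = {i} := by
        ext j
        simp only [Finset.mem_filter, Finset.mem_univ, true_and, Finset.mem_singleton,
          Pi.single_apply]
        by_cases hj : j = i
        · simp [hj]
        · simp [hj]
      rw [he, Finset.card_singleton]
    exact hdual _ hd hwt
  -- fiber counts
  have hfiber0 : ∀ i : Fin n, (F.filter (fun c => c i = 0)).card = 4 ^ (k - 1) := by
    intro i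
    obtain ⟨c₀, hc₀C, hc₀i⟩ := hcol i
    have hfib : ∀ a : F4,
        (F.filter (fun c => c i = a)).card = (F.filter (fun c => c i = 0)).card := by
      intro a
      set ca : Fin n → F4 := (a * (c₀ i)⁻¹) • c₀ with hca
      have hcaC : ca ∈ C := C.smul_mem _ hc₀C
      have hcai : ca i = a := by
        rw [hca]
        simp only [Pi.smul_apply, smul_eq_mul]
        field_simp
      have hmove : ∀ c, c ∈ C → c + ca ∈ C := fun c hc => C.add_mem hc hcaC
      refine Finset.card_nbij' (fun c => c + ca) (fun c => c + ca) ?_ ?_ ?_ ?_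
      · intro c hc
        obtain ⟨hcF, hci⟩ := Finset.mem_filter.mp hc
        refine Finset.mem_filter.mpr ⟨(hmemF _).mpr (hmove c ((hmemF c).mp hcF)), ?_⟩
        show (c + ca) i = 0
        rw [Pi.add_apply, hci, hcai]
        exact CharTwo.add_self_eq_zero a
      · intro c hc
        obtain ⟨hcF, hci⟩ := Finset.mem_filter.mp hc
        refine Finset.mem_filter.mpr ⟨(hmemF _).mpr (hmove c ((hmemF c).mp hcF)), ?_⟩
        show (c + ca) i = a
        rw [Pi.add_apply, hci, hcai, zero_add]
      · intro c _
        show c + ca + ca = c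
        rw [add_assoc, hvv, add_zero]
      · intro c _
        show c + ca + ca = c
        rw [add_assoc, hvv, add_zero]
    have hsplit : F.card = ∑ a : F4, (F.filter (fun c => c i = a)).card :=
      Finset.card_eq_sum_card_fiberwise (s := F) (f := fun c => c i) (t := Finset.univ)
        (fun c _ => by simp)
    have h4X : (4:ℕ) ^ k = 4 * (F.filter (fun c => c i = 0)).card := by
      rw [← hcardF, hsplit]
      rw [Finset.sum_congr rfl (fun a _ => hfib a), Finset.sum_const, Finset.card_univ, F4.card,
        smul_eq_mul]
    have h4X' : 4 * (F.filter (fun c => c i = 0)).card = 4 * 4 ^ (k - 1) := by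
      rw [← h4X, h4k]
    exact Nat.eq_of_mul_eq_mul_left (by norm_num) h4X'
  have hfiberne : ∀ i : Fin n, (F.filter (fun c => ¬ c i = 0)).card = 3 * 4 ^ (k - 1) := by
    intro i
    have hpm : (F.filter (fun c => ¬ c i = 0)).card
        = F.card - (F.filter (fun c => c i = 0)).card := by
      rw [Finset.filter_not, Finset.card_sdiff_of_subset (Finset.filter_subset _ _)]
    rw [hpm, hfiber0 i, hcardF, h4k]
    clear * -
    omega
  -- sum of weights
  have hsum : ∑ c ∈ F, wt c = n * (3 * 4 ^ (k - 1)) := by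
    calc ∑ c ∈ F, wt c = ∑ c ∈ F, ∑ i : Fin n, if ¬ c i = 0 then 1 else 0 :=
          Finset.sum_congr rfl (fun c _ => Finset.card_filter _ _)
      _ = ∑ i : Fin n, ∑ c ∈ F, if ¬ c i = 0 then 1 else 0 := Finset.sum_comm
      _ = ∑ i : Fin n, (F.filter (fun c => ¬ c i = 0)).card := by
          refine Finset.sum_congr rfl (fun i _ => ?_)
          rw [Finset.card_filter]
      _ = n * (3 * 4 ^ (k - 1)) := by
          rw [Finset.sum_congr rfl (fun i _ => hfiberne i), Finset.sum_const, Finset.card_univ,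
            Fintype.card_fin, smul_eq_mul]
  -- bad set B
  set B : Finset (Fin n → F4) :=
    F.filter (fun c => c ≠ 0 ∧ ((wt c : F4) ≠ (α : F4))) with hB
  have h0F : (0 : Fin n → F4) ∈ F := (hmemF 0).mpr C.zero_mem
  have hBsubE : B ⊆ F.erase 0 := by
    intro c hc
    obtain ⟨hcF, hc0, -⟩ := Finset.mem_filter.mp hc
    exact Finset.mem_erase.mpr ⟨hc0, hcF⟩
  have hEcard : (F.erase 0).card = 4 ^ k - 1 := by
    rw [Finset.card_erase_of_mem h0F, hcardF]
  have hBcardle : (4 ^ k - 1) * α + B.card ≤ n * (3 * 4 ^ (k - 1)) := by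
    rw [← hsum]
    have hFsplit : ∑ c ∈ F, wt c = ∑ c ∈ F.erase 0, wt c := by
      rw [← Finset.add_sum_erase F wt h0F]
      have hw0 : wt (0 : Fin n → F4) = 0 := by unfold wt; simp
      rw [hw0, zero_add]
    rw [hFsplit]
    have hle : ∀ c ∈ F.erase 0, α + (if c ∈ B then 1 else 0) ≤ wt c := by
      intro c hc
      obtain ⟨hc0, hcF⟩ := Finset.mem_erase.mp hc
      have hge := hminlb c ((hmemF c).mp hcF) hc0
      by_cases hcB : c ∈ B
      · have hne : wt c ≠ α := by
          intro he
          have := (Finset.mem_filter.mp hcB).2.2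
          exact this (by rw [he])
        simp only [hcB, if_true]
        omega
      · simp only [hcB, if_false]
        omega
    calc (4 ^ k - 1) * α + B.card
        = ∑ c ∈ F.erase 0, (α + if c ∈ B then 1 else 0) := by
          rw [Finset.sum_add_distrib, Finset.sum_const, hEcard, smul_eq_mul]
          congr 1
          rw [← Finset.card_filter]
          congr 1
          rw [Finset.filter_mem_eq_inter, Finset.inter_eq_right.mpr hBsubE]
      _ ≤ ∑ c ∈ F.erase 0, wt c := Finset.sum_le_sum hle
  -- B is small
  have h3mod : (4:ℕ) ^ k % 3 = 1 := by
    rw [Nat.pow_mod]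
    norm_num
  have h4kpos : 1 ≤ (4:ℕ) ^ k := Nat.one_le_pow _ _ (by norm_num)
  set D : ℕ := (4 ^ k - 1) / 3 with hDdef
  have hDmul : 3 * D = 4 ^ k - 1 := by
    clear * - hDdef h3mod h4kpos
    omega
  have hBsmall : 4 * (B.card : ℤ) ≤ 3 * (k : ℤ) - 3 := by
    have hcast : (((4 ^ k - 1) * α + B.card : ℕ) : ℤ) ≤ ((n * (3 * 4 ^ (k - 1)) : ℕ) : ℤ) :=
      Int.ofNat_le.mpr hBcardle
    push_cast [Nat.cast_sub h4kpos] at hcast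
    have hD : (3:ℤ) * (D : ℤ) = 4 ^ k - 1 := by
      have hh : ((3 * D : ℕ) : ℤ) = ((4 ^ k - 1 : ℕ) : ℤ) := by exact_mod_cast hDmul
      push_cast [Nat.cast_sub h4kpos] at hh
      exact hh
    have hDα : (3:ℤ) * (D : ℤ) * α = ((4:ℤ) ^ k - 1) * α := by
      rw [hD]
    linarith only [hcast, hDα, h2]
  -- the good set G
  set G : Finset (Fin n → F4) :=
    F.filter (fun c => c ≠ 0 ∧ ((wt c : F4) = (α : F4))) with hG
  have hGBcard : (4 ^ k - 1 : ℕ) ≤ G.card + B.card := by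
    have hsub : F.erase 0 ⊆ G ∪ B := by
      intro c hc
      obtain ⟨hc0, hcF⟩ := Finset.mem_erase.mp hc
      by_cases hw : (wt c : F4) = (α : F4)
      · exact Finset.mem_union_left _ (Finset.mem_filter.mpr ⟨hcF, hc0, hw⟩)
      · exact Finset.mem_union_right _ (Finset.mem_filter.mpr ⟨hcF, hc0, hw⟩)
    calc (4 ^ k - 1 : ℕ) = (F.erase 0).card := hEcard.symm
      _ ≤ (G ∪ B).card := Finset.card_le_card hsub
      _ ≤ G.card + B.card := Finset.card_union_le _ _
  have hGne : G.Nonempty := by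
    rw [← Finset.card_pos]
    have hBk : (B.card : ℤ) < k := by linarith only [hBsmall, hk]
    have hBk' : B.card < k := by exact_mod_cast hBk
    clear * - hGBcard hBk' hkP h4k hk
    omega
  obtain ⟨x, hxG⟩ := hGne
  obtain ⟨hxF, hx0, hxw⟩ := Finset.mem_filter.mp hxG
  have hxC : x ∈ C := (hmemF x).mp hxF
  -- nondegeneracy at x : find y₁ with L x y₁ = t ≠ 0
  have hndeg : ∃ y ∈ C, hermInner x y ≠ 0 := by
    by_contra h
    push_neg at h
    exact hx0 (hLCD x hxC h)
  obtain ⟨y, hyC, hz⟩ := hndeg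
  obtain ⟨v, hv0, hv1⟩ := F4.exists_v
  set z : F4 := hermInner x y with hzdef
  set y₁ : Fin n → F4 := ((v * z⁻¹) ^ 2) • y with hy₁
  have hy₁C : y₁ ∈ C := C.smul_mem _ hyC
  have hLy₁ : hermInner x y₁ = v := by
    rw [hy₁, hermInner_smul_right]
    have h4 : ((v * z⁻¹) ^ 2) ^ 2 = v * z⁻¹ := by
      rw [← pow_mul]
      exact F4.pow4 _
    rw [h4, ← hzdef]
    field_simp
  set t : F4 := v + v ^ 2 with ht
  have ht0 : t ≠ 0 := by
    intro h
    have hvsq : v ^ 2 = v := by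
      have h2 := CharTwo.add_self_eq_zero v
      linear_combination h - h2
    have : v * v = v * 1 := by rw [mul_one, ← sq]; exact hvsq
    exact hv1 (mul_left_cancel₀ hv0 this)
  have hLy₁t : hermInner x y₁ + (hermInner x y₁) ^ 2 = t := by rw [hLy₁, ht]
  have hLadd : ∀ a b : Fin n → F4,
      hermInner x (a + b) + (hermInner x (a + b)) ^ 2
        = (hermInner x a + (hermInner x a) ^ 2) + (hermInner x b + (hermInner x b) ^ 2) := by
    intro a b
    rw [hermInner_add_right]
    rw [F4.sq_add]
    ring
  -- T and T'
  set T : Finset (Fin n → F4) :=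
    F.filter (fun c => hermInner x c + (hermInner x c) ^ 2 = (α : F4)) with hT
  set T' : Finset (Fin n → F4) :=
    F.filter (fun c => hermInner x c + (hermInner x c) ^ 2 = (α : F4) + t) with hT'
  have hTT' : T.card ≤ T'.card := by
    apply Finset.card_le_card_of_injOn (fun c => c + y₁)
    · intro c hc
      obtain ⟨hcF, hcL⟩ := Finset.mem_filter.mp hc
      refine Finset.mem_filter.mpr ⟨(hmemF _).mpr (C.add_mem ((hmemF c).mp hcF) hy₁C), ?_⟩
      show hermInner x (c + y₁) + (hermInner x (c + y₁)) ^ 2 = (α : F4) + t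
      rw [hLadd, hcL, hLy₁t]
    · intro a _ b _ h
      exact add_right_cancel h
  have hdisj : Disjoint T T' := by
    rw [Finset.disjoint_left]
    intro c hcT hcT'
    have h1 := (Finset.mem_filter.mp hcT).2
    have h2 := (Finset.mem_filter.mp hcT').2
    rw [h1] at h2
    exact ht0 (by simpa using h2)
  have hTbound : 2 * T.card ≤ 4 ^ k := by
    have hcu : T.card + T'.card = (T ∪ T').card := (Finset.card_union_of_disjoint hdisj).symm
    have hsub : T ∪ T' ⊆ F :=
      Finset.union_subset (Finset.filter_subset _ _) (Finset.filter_subset _ _)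
    have hle := Finset.card_le_card hsub
    rw [hcardF, ← hcu] at hle
    clear * - hle hTT'
    omega
  -- good pairs land in T
  have hGsubT : ∀ c ∈ G.filter (fun c => x + c ∈ G), c ∈ T := by
    intro c hc
    obtain ⟨hcG, hxcG⟩ := Finset.mem_filter.mp hc
    obtain ⟨hcF, hc0, hcw⟩ := Finset.mem_filter.mp hcG
    obtain ⟨hxcF, hxc0, hxcw⟩ := Finset.mem_filter.mp hxcG
    refine Finset.mem_filter.mpr ⟨hcF, ?_⟩
    show hermInner x c + (hermInner x c) ^ 2 = (α : F4)
    have hp := herm_polar x c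
    rw [hermInner_self (x + c), hermInner_self x, hermInner_self c] at hp
    have hαα : (α : F4) + (α : F4) = 0 := CharTwo.add_self_eq_zero _
    linear_combination hxcw - hxw - hcw - hp - hαα
  have hbadmap : (G.filter (fun c => ¬ x + c ∈ G)).card ≤ B.card + 1 := by
    have hmaps : ∀ c ∈ G.filter (fun c => ¬ x + c ∈ G),
        x + c ∈ insert (0 : Fin n → F4) B := by
      intro c hc
      obtain ⟨hcG, hxc⟩ := Finset.mem_filter.mp hc
      obtain ⟨hcF, hc0, hcw⟩ := Finset.mem_filter.mp hcG
      have hxcC : x + c ∈ C := C.add_mem hxC ((hmemF c).mp hcF)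
      by_cases h0 : x + c = 0
      · rw [h0]; exact Finset.mem_insert_self _ _
      · refine Finset.mem_insert_of_mem (Finset.mem_filter.mpr ⟨(hmemF _).mpr hxcC, h0, ?_⟩)
        intro hw
        exact hxc (Finset.mem_filter.mpr ⟨(hmemF _).mpr hxcC, h0, hw⟩)
    calc (G.filter (fun c => ¬ x + c ∈ G)).card
        ≤ (insert (0 : Fin n → F4) B).card := by
          apply Finset.card_le_card_of_injOn (fun c => x + c) hmaps
          intro a _ b _ h
          exact add_left_cancel h
      _ ≤ B.card + 1 := Finset.card_insert_le _ _
  have hGsplit : G.card ≤ T.card + (B.card + 1) := by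
    have h1 : (G.filter (fun c => x + c ∈ G)).card ≤ T.card :=
      Finset.card_le_card (fun c hc => hGsubT c hc)
    calc G.card
        = (G.filter (fun c => x + c ∈ G) ∪ G.filter (fun c => ¬ x + c ∈ G)).card := by
          rw [Finset.filter_union_filter_not_eq]
      _ ≤ (G.filter (fun c => x + c ∈ G)).card + (G.filter (fun c => ¬ x + c ∈ G)).card :=
          Finset.card_union_le _ _
      _ ≤ T.card + (B.card + 1) := Nat.add_le_add h1 hbadmap
  -- final contradiction
  have hZ1 : ((4:ℤ) ^ k - 1) ≤ (G.card : ℤ) + B.card := by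
    have hh : ((4 ^ k - 1 : ℕ) : ℤ) ≤ ((G.card + B.card : ℕ) : ℤ) := Int.ofNat_le.mpr hGBcard
    push_cast [Nat.cast_sub h4kpos] at hh
    exact hh
  have hZ2 : (G.card : ℤ) ≤ T.card + (B.card + 1) := by exact_mod_cast hGsplit
  have hZ3 : 2 * (T.card : ℤ) ≤ 4 ^ k := by exact_mod_cast hTbound
  have hZ4 : (4:ℤ) ^ k = 4 * 4 ^ (k - 1) := by exact_mod_cast h4k
  have hZ5 : (k : ℤ) ≤ 4 ^ (k - 1) := by exact_mod_cast hkP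
  have hZ6 : (3:ℤ) ≤ k := by exact_mod_cast hk
  linarith only [hZ1, hZ2, hZ3, hZ4, hZ5, hZ6, hBsmall]
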